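/- arXiv:2208.10780 — 3 statements merged into one kernel-verified Lean document; each statement's English description precedes it below -/
import Mathlib

section
/- Fix t ∈ ℝ and p ∈ ℝⁿ. Let v : ℝ × ℝⁿ → ℝⁿ, and let Φ : ℝ × ℝⁿ → ℝⁿ be of class C² with Φ(t,q) = q for all q and ∂Φ/∂τ(τ,q) = v(τ, Φ(τ,q)) for all (τ,q); write F(τ) := d_qΦ(τ,p) and assume F(τ) is invertible for τ in a neighborhood of t. Let w : ℝ × ℝⁿ → ℝⁿ be of class C¹. Then the map τ ↦ F(τ)⁻¹ (w(τ, Φ(τ,p))) (the pull-back of w by the flow) is differentiable at τ = t, and its derivative there equals ∂w/∂t(t,p) + dw(t,p)·v(t,p) − dv(t,p)·w(t,p), i.e. equals the Lie derivative ℒ_v w at (t,p). -/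
open ContinuousLinearMap


set_option synthInstance.maxHeartbeats 1000000
set_option maxHeartbeats 1000000

theorem lie_aux {E : Type*} [NormedAddCommGroup E] [NormedSpace ℝ E] [CompleteSpace E]
    (t : ℝ) (p : E) (v Φ : ℝ × E → E)
    (hΦ : ContDiff ℝ 2 Φ)
    (hid : ∀ q, Φ (t, q) = q)
    (hflow : ∀ (τ : ℝ) (q : E), deriv (fun s => Φ (s, q)) τ = v (τ, Φ (τ, q)))
    (F : ℝ → E →L[ℝ] E)
    (hF : ∀ τ, F τ = fderiv ℝ (fun y => Φ (τ, y)) p)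
    (w : ℝ × E → E) (hw : ContDiff ℝ 1 w) :
    HasDerivAt (fun τ => Ring.inverse (F τ) (w (τ, Φ (τ, p))))
      (deriv (fun s => w (s, p)) t
        + fderiv ℝ (fun y => w (t, y)) p (v (t, p))
        - fderiv ℝ (fun y => v (t, y)) p (w (t, p))) t := by
  have hΦ1 : ContDiff ℝ 1 Φ := hΦ.of_le one_le_two
  have hΦd : Differentiable ℝ Φ := hΦ1.differentiable one_ne_zero
  set D := fderiv ℝ Φ with hDdef
  have hDc : ContDiff ℝ 1 D := hΦ.fderiv_right (le_of_eq (by norm_num))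
  have hDd : Differentiable ℝ D := hDc.differentiable one_ne_zero
  -- partial q derivative of Φ
  have hpart : ∀ τ, HasFDerivAt (fun y => Φ (τ, y)) ((D (τ, p)).comp (inr ℝ ℝ E)) p := fun τ =>
    (hΦd (τ, p)).hasFDerivAt.comp p (hasFDerivAt_prodMk_right τ p)
  have hFval : ∀ τ, F τ = (D (τ, p)).comp (inr ℝ ℝ E) := fun τ => by
    rw [hF τ, (hpart τ).fderiv]
  -- time derivative of Φ
  have hcurve : ∀ (τ : ℝ) (q : E), HasDerivAt (fun s => Φ (s, q)) (D (τ, q) (1, 0)) τ := by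
    intro τ q
    have h1 : HasDerivAt (fun s : ℝ => ((s, q) : ℝ × E)) ((1 : ℝ), (0 : E)) τ :=
      (hasDerivAt_id τ).prodMk (hasDerivAt_const τ q)
    exact (hΦd (τ, q)).hasFDerivAt.comp_hasDerivAt τ h1
  have hDv : ∀ q, D (t, q) (1, 0) = v (t, q) := by
    intro q
    rw [← (hcurve t q).deriv, hflow t q, hid q]
  -- F t = 1
  have hFt : F t = 1 := by
    rw [hF t]
    have h : (fun y : E => Φ (t, y)) = fun y => y := funext hid
    rw [h, fderiv_id']
    rfl
  -- derivative of F at t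
  have hDp : HasDerivAt (fun τ => D (τ, p)) (fderiv ℝ D (t, p) (1, 0)) t := by
    have h1 : HasDerivAt (fun s : ℝ => ((s, p) : ℝ × E)) ((1 : ℝ), (0 : E)) t :=
      (hasDerivAt_id t).prodMk (hasDerivAt_const t p)
    exact (hDd (t, p)).hasFDerivAt.comp_hasDerivAt t h1
  set B := (fderiv ℝ D (t, p) (1, 0)).comp (inr ℝ ℝ E) with hBdef
  have hFderiv : HasDerivAt F B t := by
    have h := hDp.clm_comp (hasDerivAt_const t (inr ℝ ℝ E))
    have hfe : (fun τ => (D (τ, p)).comp (inr ℝ ℝ E)) = F := funext fun τ => (hFval τ).symm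
    rw [hfe] at h
    simpa using h
  -- B equals fderiv of v(t,·) at p
  have hsymm : IsSymmSndFDerivAt ℝ Φ (t, p) := hΦ.contDiffAt.isSymmSndFDerivAt (by simp)
  have hDq : HasFDerivAt (fun q => D (t, q)) ((fderiv ℝ D (t, p)).comp (inr ℝ ℝ E)) p :=
    (hDd (t, p)).hasFDerivAt.comp p (hasFDerivAt_prodMk_right t p)
  have hBv : HasFDerivAt (fun q => v (t, q)) B p := by
    have hvq : (fun q => v (t, q)) = fun q => D (t, q) (1, 0) :=
      funext fun q => (hDv q).symm
    rw [hvq]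
    have h := hDq.clm_apply (hasFDerivAt_const ((1 : ℝ), (0 : E)) p)
    convert h using 1
    ext e
    simp [hBdef]
    exact hsymm (1, 0) (0, e)
  have hBfd : fderiv ℝ (fun q => v (t, q)) p = B := hBv.fderiv
  -- derivative of τ ↦ w (τ, Φ (τ, p))
  have hΦtp : Φ (t, p) = p := hid p
  have hΦc : HasDerivAt (fun τ => Φ (τ, p)) (v (t, p)) t := by
    have h := hcurve t p
    rwa [hDv p] at h
  have hc2 : HasDerivAt (fun τ => ((τ, Φ (τ, p)) : ℝ × E)) ((1 : ℝ), v (t, p)) t :=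
    (hasDerivAt_id t).prodMk hΦc
  have hwd : Differentiable ℝ w := hw.differentiable one_ne_zero
  have hW : HasDerivAt (fun τ => w (τ, Φ (τ, p))) (fderiv ℝ w (t, p) (1, v (t, p))) t := by
    have h := (hwd ((t : ℝ), Φ (t, p))).hasFDerivAt.comp_hasDerivAt t hc2
    rwa [hΦtp] at h
  -- split fderiv w (t,p) (1, v) into time + space parts
  have hwt : deriv (fun s => w (s, p)) t = fderiv ℝ w (t, p) (1, 0) := by
    have h1 : HasDerivAt (fun s : ℝ => ((s, p) : ℝ × E)) ((1 : ℝ), (0 : E)) t :=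
      (hasDerivAt_id t).prodMk (hasDerivAt_const t p)
    exact ((hwd (t, p)).hasFDerivAt.comp_hasDerivAt t h1).deriv
  have hws : fderiv ℝ (fun y => w (t, y)) p = (fderiv ℝ w (t, p)).comp (inr ℝ ℝ E) :=
    ((hwd (t, p)).hasFDerivAt.comp p (hasFDerivAt_prodMk_right t p)).fderiv
  have hsplit : fderiv ℝ w (t, p) (1, v (t, p))
      = deriv (fun s => w (s, p)) t + fderiv ℝ (fun y => w (t, y)) p (v (t, p)) := by
    rw [hwt, hws]
    have : ((1 : ℝ), v (t, p)) = ((1 : ℝ), (0 : E)) + ((0 : ℝ), v (t, p)) := by simp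
    rw [this, map_add]
    simp
  -- derivative of the inverse
  have hinvF : HasDerivAt (fun τ => Ring.inverse (F τ)) (-B) t := by
    have hu : HasFDerivAt (Ring.inverse (M₀ := E →L[ℝ] E))
        (-(mulLeftRight ℝ (E →L[ℝ] E) 1 1)) (F t) := by
      rw [hFt]
      simpa using hasFDerivAt_ringInverse (𝕜 := ℝ) (1 : (E →L[ℝ] E)ˣ)
    have h := hu.comp_hasDerivAt t hFderiv
    simp at h
    exact h
  -- combine
  have hfinal := hinvF.clm_apply hW
  rw [hFt, hΦtp] at hfinal
  simp only [Ring.inverse_one, ContinuousLinearMap.one_apply, neg_apply] at hfinal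
  have : -B (w (t, p)) + fderiv ℝ w (t, p) (1, v (t, p))
      = deriv (fun s => w (s, p)) t + fderiv ℝ (fun y => w (t, y)) p (v (t, p))
        - fderiv ℝ (fun y => v (t, y)) p (w (t, p)) := by
    rw [hsplit, hBfd]
    abel
  rwa [this] at hfinal

/-- **Lie derivative of a vector field as derivative of the pull-back by the flow.**
If `Φ` is the flow of `v` started at time `t` (`Φ(t,q) = q`,
`∂Φ/∂τ = v(τ,Φ)`), `F(τ) = d_qΦ(τ,p)` is invertible near `t` and `w` is a `C¹`
time-dependent vector field, then `τ ↦ F(τ)⁻¹ (w(τ, Φ(τ,p)))` is differentiable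
at `τ = t` with derivative `ℒ_v w (t,p) = ∂w/∂t + dw·v − dv·w` at `(t,p)`. -/
theorem lie_derivative_vector_field_pullback
    (n : ℕ) (t : ℝ) (p : EuclideanSpace ℝ (Fin n))
    (v Φ : ℝ × EuclideanSpace ℝ (Fin n) → EuclideanSpace ℝ (Fin n))
    (hΦ : ContDiff ℝ 2 Φ)
    (hid : ∀ q, Φ (t, q) = q)
    (hflow : ∀ (τ : ℝ) (q : EuclideanSpace ℝ (Fin n)),
      deriv (fun s => Φ (s, q)) τ = v (τ, Φ (τ, q)))
    (F : ℝ → EuclideanSpace ℝ (Fin n) →L[ℝ] EuclideanSpace ℝ (Fin n))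
    (hF : ∀ τ, F τ = fderiv ℝ (fun y => Φ (τ, y)) p)
    (hinv : ∀ᶠ τ in nhds t, IsUnit (F τ))
    (w : ℝ × EuclideanSpace ℝ (Fin n) → EuclideanSpace ℝ (Fin n))
    (hw : ContDiff ℝ 1 w) :
    HasDerivAt (fun τ => Ring.inverse (F τ) (w (τ, Φ (τ, p))))
      (deriv (fun s => w (s, p)) t
        + fderiv ℝ (fun y => w (t, y)) p (v (t, p))
        - fderiv ℝ (fun y => v (t, y)) p (w (t, p))) t :=
  lie_aux t p v Φ hΦ hid hflow F hF w hw
end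

section
/- Fix t ∈ ℝ and p ∈ ℝⁿ. Let v : ℝ × ℝⁿ → ℝⁿ, and let Φ : ℝ × ℝⁿ → ℝⁿ be of class C² with Φ(t,q) = q for all q and ∂Φ/∂τ(τ,q) = v(τ, Φ(τ,q)); write F(τ) := d_qΦ(τ,p) and assume F(τ) is invertible for τ near t. Let κ : ℝ × ℝⁿ → ℒ(ℝⁿ; ℝⁿ) be a time-dependent (1,1)-tensor field of class C¹. Then the map τ ↦ F(τ)⁻¹ ∘ κ(τ, Φ(τ,p)) ∘ F(τ) (the pull-back of κ by the flow) is differentiable at τ = t, and its derivative there equals (∂κ/∂t + dκ·v)(t,p) + κ(t,p)∘dv(t,p) − dv(t,p)∘κ(t,p) (the Jaumann Lie derivative Dκ/Dt + κ·dv − dv·κ). -/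
private abbrev EE (n : ℕ) := EuclideanSpace ℝ (Fin n)

set_option maxHeartbeats 1000000 in
/-- **Jaumann Lie derivative of a mixed (1,1)-tensor as derivative of its pull-back.**
If `Φ` is the flow of `v` started at time `t`, `F(τ) = d_qΦ(τ,p)` is invertible
near `t` and `κ` is a `C¹` time-dependent (1,1)-tensor field, then
`τ ↦ F(τ)⁻¹ ∘ κ(τ, Φ(τ,p)) ∘ F(τ)` is differentiable at `τ = t` with derivative
`Dκ/Dt + κ∘dv − dv∘κ` at `(t,p)`. -/
theorem lie_derivative_mixed_tensor_pullback
    (n : ℕ) (t : ℝ) (p : EuclideanSpace ℝ (Fin n))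
    (v Φ : ℝ × EuclideanSpace ℝ (Fin n) → EuclideanSpace ℝ (Fin n))
    (hΦ : ContDiff ℝ 2 Φ)
    (hid : ∀ q, Φ (t, q) = q)
    (hflow : ∀ (τ : ℝ) (q : EuclideanSpace ℝ (Fin n)),
      deriv (fun s => Φ (s, q)) τ = v (τ, Φ (τ, q)))
    (F : ℝ → EuclideanSpace ℝ (Fin n) →L[ℝ] EuclideanSpace ℝ (Fin n))
    (hF : ∀ τ, F τ = fderiv ℝ (fun y => Φ (τ, y)) p)
    (hinv : ∀ᶠ τ in nhds t, IsUnit (F τ))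
    (κ : ℝ × EuclideanSpace ℝ (Fin n) →
      (EuclideanSpace ℝ (Fin n) →L[ℝ] EuclideanSpace ℝ (Fin n)))
    (hκ : ContDiff ℝ 1 κ) :
    HasDerivAt (fun τ => ((Ring.inverse (F τ)).comp (κ (τ, Φ (τ, p)))).comp (F τ))
      (deriv (fun s => κ (s, p)) t
        + fderiv ℝ (fun y => κ (t, y)) p (v (t, p))
        + (κ (t, p)).comp (fderiv ℝ (fun y => v (t, y)) p)
        - (fderiv ℝ (fun y => v (t, y)) p).comp (κ (t, p))) t := by
  have hΦd : Differentiable ℝ Φ := hΦ.differentiable (by norm_num)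
  have hΦ1 : ContDiff ℝ 1 (fderiv ℝ Φ) := hΦ.fderiv_right (by norm_num)
  have hΦ1d : Differentiable ℝ (fderiv ℝ Φ) := hΦ1.differentiable one_ne_zero
  set Φ' : ℝ × EE n → (ℝ × EE n) →L[ℝ] EE n := fderiv ℝ Φ with hΦ'
  set A : (ℝ × EE n) →L[ℝ] (ℝ × EE n) →L[ℝ] EE n := fderiv ℝ Φ' (t, p) with hA
  have hAd : HasFDerivAt Φ' A (t, p) := (hΦ1d (t, p)).hasFDerivAt
  -- the embedding y ↦ (τ, y)
  have hinr : ∀ τ : ℝ, HasFDerivAt (fun y : EE n => ((τ, y) : ℝ × EE n))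
      (ContinuousLinearMap.inr ℝ ℝ (EE n)) p := by
    intro τ
    have h := (hasFDerivAt_const (𝕜 := ℝ) (E := EE n) τ p).prodMk (hasFDerivAt_id p)
    convert h using 1
    · rfl
    · rfl
    · rfl
    · rfl
    · rfl
  -- F τ = Φ'(τ,p) ∘ inr
  have hFeq : ∀ τ, F τ = (Φ' (τ, p)).comp (ContinuousLinearMap.inr ℝ ℝ (EE n)) := by
    intro τ
    rw [hF τ]
    exact (((hΦd (τ, p)).hasFDerivAt).comp p (hinr τ)).fderiv
  -- F t = 1
  have hFt : F t = 1 := by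
    rw [hF t]
    have h : (fun y : EE n => Φ (t, y)) = fun y => y := funext hid
    rw [h, fderiv_id']
    rfl
  -- the curve s ↦ (s, q) and time derivative of Φ
  have hcurve : ∀ (q : EE n) (τ : ℝ), HasDerivAt (fun s : ℝ => ((s, q) : ℝ × EE n))
      ((1, 0) : ℝ × EE n) τ := fun q τ => (hasDerivAt_id τ).prodMk (hasDerivAt_const τ q)
  have htime : ∀ (τ : ℝ) (q : EE n), Φ' (τ, q) (1, 0) = v (τ, Φ (τ, q)) := by
    intro τ q
    have h1 : HasDerivAt (fun s => Φ (s, q)) (Φ' (τ, q) (1, 0)) τ :=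
      ((hΦd (τ, q)).hasFDerivAt).comp_hasDerivAt τ (hcurve q τ)
    rw [← hflow τ q]
    exact h1.deriv.symm
  -- derivative of F
  have hR : HasFDerivAt
      (fun B : (ℝ × EE n) →L[ℝ] EE n => B.comp (ContinuousLinearMap.inr ℝ ℝ (EE n)))
      ((ContinuousLinearMap.compL ℝ (EE n) (ℝ × EE n) (EE n)).flip
        (ContinuousLinearMap.inr ℝ ℝ (EE n))) (Φ' (t, p)) :=
    ((ContinuousLinearMap.compL ℝ (EE n) (ℝ × EE n) (EE n)).flip
      (ContinuousLinearMap.inr ℝ ℝ (EE n))).hasFDerivAt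
  have hΦ'p : HasDerivAt (fun τ => Φ' (τ, p)) (A (1, 0)) t :=
    hAd.comp_hasDerivAt t (hcurve p t)
  have hFder : HasDerivAt F ((A (1, 0)).comp (ContinuousLinearMap.inr ℝ ℝ (EE n))) t := by
    have h := hR.comp_hasDerivAt t hΦ'p
    simp only [ContinuousLinearMap.flip_apply, ContinuousLinearMap.compL_apply] at h
    convert h using 1
    · rfl
    · rfl
    · rfl
    funext τ
    exact hFeq τ
  -- identify F'(t) with dv
  set dv : EE n →L[ℝ] EE n := fderiv ℝ (fun y => v (t, y)) p with hdv
  have hsymm : ∀ a b : ℝ × EE n, A a b = A b a := fun a b =>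
    second_derivative_symmetric (fun z => (hΦd z).hasFDerivAt) hAd a b
  set w : ℝ × EE n → EE n := fun z => Φ' z (1, 0) with hw
  have hwv : ∀ z : ℝ × EE n, w z = v (z.1, Φ z) := fun z => htime z.1 z.2
  have hwd : HasFDerivAt w
      ((ContinuousLinearMap.apply ℝ (EE n) ((1, 0) : ℝ × EE n)).comp A) (t, p) :=
    (ContinuousLinearMap.apply ℝ (EE n) ((1, 0) : ℝ × EE n)).hasFDerivAt.comp (t, p) hAd
  have hveq : (fun y : EE n => v (t, y)) = fun y : EE n => w (t, y) := by
    funext y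
    rw [hwv (t, y)]
    simp only [hid y]
  have hwt : HasFDerivAt (fun y : EE n => w (t, y))
      (((ContinuousLinearMap.apply ℝ (EE n) ((1, 0) : ℝ × EE n)).comp A).comp
        (ContinuousLinearMap.inr ℝ ℝ (EE n))) p :=
    hwd.comp p (hinr t)
  have hdveq : dv = (A (1, 0)).comp (ContinuousLinearMap.inr ℝ ℝ (EE n)) := by
    rw [hdv, hveq, hwt.fderiv]
    refine ContinuousLinearMap.ext fun x => ?_
    simp only [ContinuousLinearMap.comp_apply, ContinuousLinearMap.inr_apply,
      ContinuousLinearMap.apply_apply]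
    exact hsymm (0, x) (1, 0)
  have hFder' : HasDerivAt F dv t := hdveq ▸ hFder
  -- derivative of G = Ring.inverse ∘ F
  have hunit : IsUnit (F t) := hinv.self_of_nhds
  have hGder : HasDerivAt (fun τ => Ring.inverse (F τ)) (-dv) t := by
    have h1 := hasFDerivAt_ringInverse (𝕜 := ℝ) hunit.unit
    rw [IsUnit.unit_spec] at h1
    have h2 := h1.comp_hasDerivAt t hFder'
    convert h2 using 1
    · rfl
    · rfl
    · rfl
    · rfl
    have hu1 : (↑hunit.unit⁻¹ : EE n →L[ℝ] EE n) = 1 := by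
      have h : hunit.unit = 1 := Units.ext (by simp [hFt])
      rw [h]; rfl
    simp [hu1, ContinuousLinearMap.mulLeftRight_apply]
  -- derivative of K = κ(τ, Φ(τ,p))
  have hκd : Differentiable ℝ κ := hκ.differentiable one_ne_zero
  have hΦp : HasDerivAt (fun s => Φ (s, p)) (v (t, p)) t := by
    have h1 : HasDerivAt (fun s => Φ (s, p)) (Φ' (t, p) (1, 0)) t :=
      ((hΦd (t, p)).hasFDerivAt).comp_hasDerivAt t (hcurve p t)
    rwa [htime t p, hid p] at h1
  have hc : HasDerivAt (fun τ : ℝ => ((τ, Φ (τ, p)) : ℝ × EE n))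
      ((1, v (t, p)) : ℝ × EE n) t := (hasDerivAt_id t).prodMk hΦp
  set B : (ℝ × EE n) →L[ℝ] EE n →L[ℝ] EE n := fderiv ℝ κ (t, p) with hB
  have hKder : HasDerivAt (fun τ => κ (τ, Φ (τ, p))) (B (1, v (t, p))) t := by
    have h := ((hκd (t, Φ (t, p))).hasFDerivAt).comp_hasDerivAt t hc
    rwa [hid p] at h
  have hB1 : deriv (fun s => κ (s, p)) t = B (1, 0) :=
    (((hκd (t, p)).hasFDerivAt).comp_hasDerivAt t (hcurve p t)).deriv
  have hB2 : fderiv ℝ (fun y => κ (t, y)) p (v (t, p)) = B (0, v (t, p)) := by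
    have h1 : HasFDerivAt (fun y : EE n => κ (t, y))
        (B.comp (ContinuousLinearMap.inr ℝ ℝ (EE n))) p :=
      ((hκd (t, p)).hasFDerivAt).comp p (hinr t)
    rw [h1.fderiv]; rfl
  have hBsplit : B (1, v (t, p)) = B (1, 0) + B (0, v (t, p)) := by
    rw [← map_add]
    norm_num
  -- product rule
  have hmain := (hGder.mul hKder).mul hFder'
  have hG0 : Ring.inverse (F t) = 1 := by rw [hFt]; simp
  simp only [hid p, hG0, hFt, mul_one, one_mul] at hmain
  convert hmain using 1
  · rfl
  · rfl
  · rfl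
  · rfl
  · rw [hB1, hB2, ← hBsplit, Ring.inverse_one]
    simp only [← ContinuousLinearMap.mul_def]
    noncomm_ring
    simp only [Pi.mul_apply, hG0, hid p, one_mul]
    rw [smul_mul_assoc, add_comm (κ (t, p) * dv)]
end

section
/- Let v : ℝ × ℝⁿ → ℝⁿ be a time-dependent vector field and α : ℝ × ℝⁿ → (ℝⁿ)* a time-dependent one-form, both of class C². Then the second-order Lie derivative satisfies, at every point (t,x): ℒ_v(ℒ_v α) = ∂²α/∂t² + 2 d(∂α/∂t)·v + 2 (∂α/∂t)∘dv + dα·(∂v/∂t) + α∘(∂(dv)/∂t) + d²α(v,v) + dα·(dv·v) + 2 (dα·v)∘dv + α∘(d²v·v) + (α∘dv)∘dv, where d² denotes the second spatial Fréchet differential. -/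
set_option maxHeartbeats 1000000


noncomputable section

variable {E : Type*} [NormedAddCommGroup E] [NormedSpace ℝ E]

/-- Time partial derivative `∂f/∂t (t,x)` of a time-dependent field. -/
def timeDeriv {F : Type*} [NormedAddCommGroup F] [NormedSpace ℝ F]
    (f : ℝ × E → F) (t : ℝ) (x : E) : F :=
  deriv (fun s => f (s, x)) t

/-- Spatial Fréchet differential `df (t,x)` of a time-dependent field. -/
def spaceDeriv {F : Type*} [NormedAddCommGroup F] [NormedSpace ℝ F]
    (f : ℝ × E → F) (t : ℝ) (x : E) : E →L[ℝ] F :=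
  fderiv ℝ (fun y => f (t, y)) x

/-- Lie derivative of a time-dependent one-form `α` along the velocity field `v`:
`ℒ_v α = ∂α/∂t + dα·v + α∘dv`. -/
def lieDerivA (v : ℝ × E → E) (α : ℝ × E → (E →L[ℝ] ℝ)) : ℝ × E → (E →L[ℝ] ℝ) := fun q =>
  timeDeriv α q.1 q.2 + spaceDeriv α q.1 q.2 (v q) + (α q).comp (spaceDeriv v q.1 q.2)

variable {F : Type*} [NormedAddCommGroup F] [NormedSpace ℝ F]

lemma timeDeriv_eq' {f : ℝ × E → F} {t : ℝ} {x : E} (hf : DifferentiableAt ℝ f (t, x)) :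
    timeDeriv f t x = fderiv ℝ f (t, x) (1, 0) := by
  have hg : HasDerivAt (fun s : ℝ => ((s, x) : ℝ × E)) (1, 0) t :=
    (hasDerivAt_id t).prodMk (hasDerivAt_const t x)
  exact (hf.hasFDerivAt.comp_hasDerivAt t hg).deriv

lemma spaceDeriv_eq' {f : ℝ × E → F} {t : ℝ} {x : E} (hf : DifferentiableAt ℝ f (t, x)) :
    spaceDeriv f t x = (fderiv ℝ f (t, x)).comp (ContinuousLinearMap.inr ℝ ℝ E) := by
  have hg : HasFDerivAt (fun y : E => ((t, y) : ℝ × E)) (ContinuousLinearMap.inr ℝ ℝ E) x :=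
    (hasFDerivAt_const t x).prodMk (hasFDerivAt_id x)
  exact (hf.hasFDerivAt.comp x hg).fderiv

section second
variable {f : ℝ × E → F} (hf : ContDiff ℝ 2 f) {t : ℝ} {x : E}
include hf

lemma diff1' : Differentiable ℝ f := hf.differentiable two_ne_zero

lemma diffd' : Differentiable ℝ (fderiv ℝ f) :=
  (hf.fderiv_right (m := 1) (by norm_num)).differentiable one_ne_zero

lemma timeDeriv_timeDeriv' :
    timeDeriv (fun q => timeDeriv f q.1 q.2) t x
      = fderiv ℝ (fderiv ℝ f) (t, x) (1, 0) (1, 0) := by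
  have h1 : (fun q : ℝ × E => timeDeriv f q.1 q.2) = fun q => fderiv ℝ f q (1, 0) :=
    funext fun q => timeDeriv_eq' (hf.differentiable two_ne_zero q)
  rw [h1, timeDeriv_eq' ((diffd' hf (t, x)).clm_apply (differentiableAt_const _)),
    fderiv_clm_apply (diffd' hf (t, x)) (differentiableAt_const _)]
  simp

lemma spaceDeriv_timeDeriv' :
    spaceDeriv (fun q => timeDeriv f q.1 q.2) t x
      = ((fderiv ℝ (fderiv ℝ f) (t, x)).flip (1, 0)).comp (ContinuousLinearMap.inr ℝ ℝ E) := by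
  have h1 : (fun q : ℝ × E => timeDeriv f q.1 q.2) = fun q => fderiv ℝ f q (1, 0) :=
    funext fun q => timeDeriv_eq' (hf.differentiable two_ne_zero q)
  rw [h1, spaceDeriv_eq' ((diffd' hf (t, x)).clm_apply (differentiableAt_const _)),
    fderiv_clm_apply (diffd' hf (t, x)) (differentiableAt_const _)]
  ext w
  simp

lemma timeDeriv_spaceDeriv' :
    timeDeriv (fun q => spaceDeriv f q.1 q.2) t x
      = (fderiv ℝ (fderiv ℝ f) (t, x) (1, 0)).comp (ContinuousLinearMap.inr ℝ ℝ E) := by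
  have h1 : (fun q : ℝ × E => spaceDeriv f q.1 q.2)
      = fun q => (fderiv ℝ f q).comp (ContinuousLinearMap.inr ℝ ℝ E) :=
    funext fun q => spaceDeriv_eq' (hf.differentiable two_ne_zero q)
  rw [h1, timeDeriv_eq' ((diffd' hf (t, x)).clm_comp (differentiableAt_const _)),
    fderiv_clm_comp (diffd' hf (t, x)) (differentiableAt_const _)]
  ext w
  simp

lemma spaceDeriv_spaceDeriv' (w : E) :
    spaceDeriv (fun q => spaceDeriv f q.1 q.2) t x w
      = (fderiv ℝ (fderiv ℝ f) (t, x) (0, w)).comp (ContinuousLinearMap.inr ℝ ℝ E) := by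
  have h1 : (fun q : ℝ × E => spaceDeriv f q.1 q.2)
      = fun q => (fderiv ℝ f q).comp (ContinuousLinearMap.inr ℝ ℝ E) :=
    funext fun q => spaceDeriv_eq' (hf.differentiable two_ne_zero q)
  rw [h1, spaceDeriv_eq' ((diffd' hf (t, x)).clm_comp (differentiableAt_const _)),
    fderiv_clm_comp (diffd' hf (t, x)) (differentiableAt_const _)]
  ext u
  simp

end second

/-- **Second-order Lie derivative of a one-form.** For a `C²` time-dependent velocity
field `v` and one-form `α` on `ℝⁿ`, at every point `(t,x)`:
`ℒ_v(ℒ_v α) = ∂²α/∂t² + 2 d(∂α/∂t)·v + 2 (∂α/∂t)∘dv + dα·(∂v/∂t) + α∘(∂(dv)/∂t)`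
`+ d²α(v,v) + dα·(dv·v) + 2 (dα·v)∘dv + α∘(d²v·v) + (α∘dv)∘dv`. -/
theorem second_order_lie_derivative_one_form
    (n : ℕ) (v : ℝ × EuclideanSpace ℝ (Fin n) → EuclideanSpace ℝ (Fin n))
    (α : ℝ × EuclideanSpace ℝ (Fin n) → (EuclideanSpace ℝ (Fin n) →L[ℝ] ℝ))
    (hv : ContDiff ℝ 2 v) (hα : ContDiff ℝ 2 α)
    (t : ℝ) (x : EuclideanSpace ℝ (Fin n)) :
    lieDerivA v (lieDerivA v α) (t, x)
      = timeDeriv (fun q => timeDeriv α q.1 q.2) t x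
        + (2 : ℝ) • spaceDeriv (fun q => timeDeriv α q.1 q.2) t x (v (t, x))
        + (2 : ℝ) • (timeDeriv α t x).comp (spaceDeriv v t x)
        + spaceDeriv α t x (timeDeriv v t x)
        + (α (t, x)).comp (timeDeriv (fun q => spaceDeriv v q.1 q.2) t x)
        + spaceDeriv (fun q => spaceDeriv α q.1 q.2) t x (v (t, x)) (v (t, x))
        + spaceDeriv α t x (spaceDeriv v t x (v (t, x)))
        + (2 : ℝ) • (spaceDeriv α t x (v (t, x))).comp (spaceDeriv v t x)
        + (α (t, x)).comp (spaceDeriv (fun q => spaceDeriv v q.1 q.2) t x (v (t, x)))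
        + ((α (t, x)).comp (spaceDeriv v t x)).comp (spaceDeriv v t x) := by
  have _dummy : True := trivial
  have hα1 : Differentiable ℝ α := hα.differentiable two_ne_zero
  have hv1 : Differentiable ℝ v := hv.differentiable two_ne_zero
  have hαd : Differentiable ℝ (fderiv ℝ α) := diffd' hα
  have hvd : Differentiable ℝ (fderiv ℝ v) := diffd' hv
  set ι := ContinuousLinearMap.inr ℝ ℝ (EuclideanSpace ℝ (Fin n)) with hι
  set A1 := fderiv ℝ α (t, x) with hA1
  set A2 := fderiv ℝ (fderiv ℝ α) (t, x) with hA2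
  set V0 := v (t, x) with hV0
  set V1 := fderiv ℝ v (t, x) with hV1
  set V2 := fderiv ℝ (fderiv ℝ v) (t, x) with hV2
  set L := (ContinuousLinearMap.compL ℝ (EuclideanSpace ℝ (Fin n)) (ℝ × (EuclideanSpace ℝ (Fin n))) (EuclideanSpace ℝ (Fin n))).flip ι with hL
  -- rewrite of the inner Lie derivative
  have hβeq : lieDerivA v α
      = fun q => fderiv ℝ α q (1, v q) + (α q).comp ((fderiv ℝ v q).comp ι) := by
    funext q
    rw [lieDerivA, timeDeriv_eq' (hα1 q), spaceDeriv_eq' (hα1 q), spaceDeriv_eq' (hv1 q)]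
    have hs : ((1 : ℝ), v q) = ((1 : ℝ), (0 : (EuclideanSpace ℝ (Fin n)))) + ((0 : ℝ), v q) := by simp
    rw [hs, map_add]
    simp [ι]
  -- derivative of the inner Lie derivative at (t, x)
  have hu : HasFDerivAt (fun q : ℝ × (EuclideanSpace ℝ (Fin n)) => ((1 : ℝ), v q))
      (((0 : (ℝ × (EuclideanSpace ℝ (Fin n))) →L[ℝ] ℝ)).prod V1) (t, x) :=
    (hasFDerivAt_const 1 _).prodMk (hv1 (t, x)).hasFDerivAt
  have hd : HasFDerivAt (fun q : ℝ × (EuclideanSpace ℝ (Fin n)) => (fderiv ℝ v q).comp ι) (L.comp V2) (t, x) :=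
    L.hasFDerivAt.comp (t, x) (hvd (t, x)).hasFDerivAt
  have hβd : HasFDerivAt (lieDerivA v α)
      ((A1.comp (((0 : (ℝ × (EuclideanSpace ℝ (Fin n))) →L[ℝ] ℝ)).prod V1) + A2.flip (1, V0))
        + ((ContinuousLinearMap.compL ℝ (EuclideanSpace ℝ (Fin n)) (EuclideanSpace ℝ (Fin n)) ℝ (α (t, x))).comp (L.comp V2)
          + ((ContinuousLinearMap.compL ℝ (EuclideanSpace ℝ (Fin n)) (EuclideanSpace ℝ (Fin n)) ℝ).flip (V1.comp ι)).comp A1)) (t, x) := by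
    rw [hβeq]
    exact ((hαd (t, x)).hasFDerivAt.clm_apply hu).add
      ((hα1 (t, x)).hasFDerivAt.clm_comp hd)
  -- symmetry of the second derivative of α
  have hsym : A2 (1, 0) (0, V0) = A2 (0, V0) (1, 0) :=
    (hα.contDiffAt.isSymmSndFDerivAt (by simp)) _ _
  -- rewrite RHS
  rw [timeDeriv_timeDeriv' hα, timeDeriv_spaceDeriv' hv,
    spaceDeriv_spaceDeriv' hα, spaceDeriv_spaceDeriv' hv,
    spaceDeriv_timeDeriv' hα,
    timeDeriv_eq' (hα1 (t, x)), timeDeriv_eq' (hv1 (t, x)),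
    spaceDeriv_eq' (hα1 (t, x)), spaceDeriv_eq' (hv1 (t, x))]
  -- rewrite LHS
  rw [lieDerivA]
  rw [show ((t, x) : ℝ × (EuclideanSpace ℝ (Fin n))).1 = t from rfl, show ((t, x) : ℝ × (EuclideanSpace ℝ (Fin n))).2 = x from rfl]
  rw [timeDeriv_eq' hβd.differentiableAt, spaceDeriv_eq' hβd.differentiableAt,
    hβd.fderiv, spaceDeriv_eq' (hv1 (t, x))]
  rw [show lieDerivA v α (t, x) = A1 (1, V0) + (α (t, x)).comp (V1.comp ι) from by
    rw [hβeq]]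
  have hs : ((1 : ℝ), V0) = ((1 : ℝ), (0 : (EuclideanSpace ℝ (Fin n)))) + ((0 : ℝ), V0) := by simp
  rw [hs]
  ext w
  simp only [hL, hι, ContinuousLinearMap.add_apply, ContinuousLinearMap.comp_apply,
    ContinuousLinearMap.flip_apply, ContinuousLinearMap.compL_apply,
    ContinuousLinearMap.prod_apply, ContinuousLinearMap.zero_apply,
    ContinuousLinearMap.inr_apply, ContinuousLinearMap.smul_apply, map_add,
    ContinuousLinearMap.coe_comp', Function.comp_apply, smul_eq_mul]
  rw [hsym]
  ring

end
end
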